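/- Let ξ̂_1,…,ξ̂_N ∈ ℝ^n, x ∈ {0,1}^n, α ∈ (0,1], ε ≥ 0, and q ∈ [1,∞]. Set γ = N if α < 1/N and γ = 1/α if α ≥ 1/N. Then the supremum, over all perturbations (Δ_1,…,Δ_N) ∈ (ℝ^n)^N satisfying Σ_{i=1}^N ‖Δ_i‖_q ≤ Nε, of CVaR^α((ξ̂_1+Δ_1)ᵀx,…,(ξ̂_N+Δ_N)ᵀx) equals CVaR^α(ξ̂_1ᵀx,…,ξ̂_Nᵀx) + γ ε ‖x‖_{q'}. -/

import Mathlib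

open scoped BigOperators ENNReal

/-- Conditional Value at Risk of the values `c 1, …, c N` at risk level `α`:
`CVaR^α(c) = inf_{t ∈ ℝ} ( t + (1/(α N)) Σ_i max(c i − t, 0) )`. -/
noncomputable def cvar (N : ℕ) (α : ℝ) (c : Fin N → ℝ) : ℝ :=
  ⨅ t : ℝ, (t + 1 / (α * N) * ∑ i, max (c i - t) 0)

/-- The `q`-norm on `ℝ^n`, for an exponent `q ∈ [1,∞]` (represented as `ℝ≥0∞`). -/
noncomputable def qnorm {n : ℕ} (q : ℝ≥0∞) (v : Fin n → ℝ) : ℝ :=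
  if q = ⊤ then ⨆ i, |v i| else (∑ i, |v i| ^ q.toReal) ^ (1 / q.toReal)

lemma cvar_f_lb {N : ℕ} (hN : 0 < N) {α : ℝ} (hα0 : 0 < α) (hα1 : α ≤ 1)
    (c : Fin N → ℝ) (t : ℝ) :
    (∑ i, c i) / N ≤ t + 1 / (α * N) * ∑ i, max (c i - t) 0 := by
  have hN0 : (0:ℝ) < N := Nat.cast_pos.mpr hN
  have hαN : (0:ℝ) < α * N := mul_pos hα0 hN0
  have h1 : (0:ℝ) ≤ ∑ i, max (c i - t) 0 :=
    Finset.sum_nonneg fun i _ => le_max_right _ _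
  have h2 : (∑ i, c i) - N * t ≤ ∑ i, max (c i - t) 0 := by
    calc (∑ i, c i) - N * t = ∑ i : Fin N, (c i - t) := by
          rw [Finset.sum_sub_distrib]
          simp [Finset.card_univ, mul_comm]
      _ ≤ _ := Finset.sum_le_sum fun i _ => le_max_left _ _
  set M := ∑ i, max (c i - t) 0 with hM
  have key : α * (∑ i, c i) ≤ α * N * t + M := by
    nlinarith [mul_nonneg (sub_nonneg.mpr hα1) h1, mul_nonneg hα0.le (sub_nonneg.mpr h2)]
  have e1 : (∑ i, c i) / N = (α * ∑ i, c i) / (α * N) := by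
    field_simp
  have e2 : t + 1 / (α * N) * M = (α * N * t + M) / (α * N) := by
    field_simp
  rw [e1, e2]
  gcongr

lemma cvar_bdd {N : ℕ} (hN : 0 < N) {α : ℝ} (hα0 : 0 < α) (hα1 : α ≤ 1) (c : Fin N → ℝ) :
    BddBelow (Set.range fun t : ℝ => t + 1 / (α * N) * ∑ i, max (c i - t) 0) := by
  refine ⟨(∑ i, c i) / N, ?_⟩
  rintro y ⟨t, rfl⟩
  exact cvar_f_lb hN hα0 hα1 c t

lemma cvar_le_f {N : ℕ} (hN : 0 < N) {α : ℝ} (hα0 : 0 < α) (hα1 : α ≤ 1) (c : Fin N → ℝ)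
    (t : ℝ) : cvar N α c ≤ t + 1 / (α * N) * ∑ i, max (c i - t) 0 :=
  ciInf_le (cvar_bdd hN hα0 hα1 c) t

lemma le_cvar {N : ℕ} {α : ℝ} (c : Fin N → ℝ) (b : ℝ)
    (h : ∀ t : ℝ, b ≤ t + 1 / (α * N) * ∑ i, max (c i - t) 0) : b ≤ cvar N α c :=
  le_ciInf h

lemma cvar_mono {N : ℕ} (hN : 0 < N) {α : ℝ} (hα0 : 0 < α) (hα1 : α ≤ 1)
    {c c' : Fin N → ℝ} (h : ∀ i, c i ≤ c' i) : cvar N α c ≤ cvar N α c' := by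
  refine le_ciInf fun t => ?_
  refine le_trans (cvar_le_f hN hα0 hα1 c t) ?_
  have hs : (0:ℝ) ≤ 1 / (α * N) := by positivity
  gcongr with i hi
  exact h i

lemma cvar_add_const {N : ℕ} (hN : 0 < N) {α : ℝ} (hα0 : 0 < α) (hα1 : α ≤ 1)
    (c : Fin N → ℝ) (M : ℝ) : cvar N α (fun i => c i + M) = cvar N α c + M := by
  have hfe : ∀ t : ℝ, (t + M) + 1 / (α * N) * ∑ i, max (c i + M - (t + M)) 0
      = (t + 1 / (α * N) * ∑ i, max (c i - t) 0) + M := by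
    intro t
    have : ∀ i : Fin N, max (c i + M - (t + M)) 0 = max (c i - t) 0 := by
      intro i; congr 1; ring
    simp only [this]; ring
  apply le_antisymm
  · rw [← sub_le_iff_le_add]
    refine le_cvar c _ fun t => ?_
    rw [sub_le_iff_le_add, ← hfe t]
    exact cvar_le_f hN hα0 hα1 _ (t + M)
  · refine le_cvar _ _ fun t => ?_
    have he := hfe (t - M)
    rw [sub_add_cancel] at he
    have hle := cvar_le_f hN hα0 hα1 c (t - M)
    rw [he]
    linarith

lemma cvar_add_le {N : ℕ} (hN : 0 < N) {α : ℝ} (hα0 : 0 < α) (hα1 : α ≤ 1)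
    (c d : Fin N → ℝ) :
    cvar N α (fun i => c i + d i) ≤ cvar N α c + 1 / (α * N) * ∑ i, |d i| := by
  have hs : (0:ℝ) ≤ 1 / (α * N) := by positivity
  rw [← sub_le_iff_le_add]
  refine le_cvar c _ fun t => ?_
  rw [sub_le_iff_le_add]
  calc cvar N α (fun i => c i + d i)
      ≤ t + 1 / (α * N) * ∑ i, max (c i + d i - t) 0 := cvar_le_f hN hα0 hα1 _ t
    _ ≤ t + 1 / (α * N) * ∑ i, (max (c i - t) 0 + |d i|) := by
        gcongr with i hi
        rcases le_total (c i + d i - t) 0 with h | h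
        · simp [max_eq_right h]
          positivity
        · rw [max_eq_left h]
          have h2 := le_max_left (c i - t) 0
          have h3 := le_abs_self (d i)
          linarith
    _ = (t + 1 / (α * N) * ∑ i, max (c i - t) 0) + 1 / (α * N) * ∑ i, |d i| := by
        rw [Finset.sum_add_distrib]; ring

lemma cvar_eq_max {N : ℕ} (hN : 0 < N) {α : ℝ} (hα0 : 0 < α) (hα1 : α ≤ 1)
    (hαN : α * N ≤ 1) (c : Fin N → ℝ) (k : Fin N) (hk : ∀ i, c i ≤ c k) :
    cvar N α c = c k := by
  have hN0 : (0:ℝ) < N := Nat.cast_pos.mpr hN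
  have hαN0 : (0:ℝ) < α * N := by positivity
  have hs1 : (1:ℝ) ≤ 1 / (α * N) := by
    rw [le_div_iff₀ hαN0]; linarith
  apply le_antisymm
  · have := cvar_le_f hN hα0 hα1 c (c k)
    have hz : ∑ i, max (c i - c k) 0 = 0 := by
      refine Finset.sum_eq_zero fun i _ => max_eq_right (by linarith [hk i])
    rw [hz] at this; simpa using this
  · refine le_cvar c _ fun t => ?_
    rcases le_total t (c k) with h | h
    · have h1 : max (c k - t) 0 ≤ ∑ i, max (c i - t) 0 :=
        Finset.single_le_sum (f := fun i => max (c i - t) 0)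
          (fun i _ => le_max_right _ _) (Finset.mem_univ k)
      have h2 : max (c k - t) 0 = c k - t := max_eq_left (by linarith)
      rw [h2] at h1
      have hM0 : (0:ℝ) ≤ ∑ i, max (c i - t) 0 :=
        Finset.sum_nonneg fun i _ => le_max_right _ _
      nlinarith [mul_nonneg (sub_nonneg.mpr hs1) hM0]
    · have h1 : (0:ℝ) ≤ ∑ i, max (c i - t) 0 :=
        Finset.sum_nonneg fun i _ => le_max_right _ _
      nlinarith

lemma cvar_shift_top {N : ℕ} (hN : 0 < N) {α : ℝ} (hα0 : 0 < α) (hα1 : α ≤ 1)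
    (hαN : 1 ≤ α * N) (c : Fin N → ℝ) (k : Fin N) (hk : ∀ i, c i ≤ c k)
    (D : ℝ) (hD : 0 ≤ D) :
    cvar N α (fun i => c i + if i = k then D else 0) = cvar N α c + 1 / (α * N) * D := by
  have hN0 : (0:ℝ) < N := Nat.cast_pos.mpr hN
  have hαN0 : (0:ℝ) < α * N := by positivity
  have hs : (0:ℝ) < 1 / (α * N) := by positivity
  have hs1 : 1 / (α * N) ≤ 1 := by
    rw [div_le_one hαN0]; linarith
  have hck : cvar N α c ≤ c k := by
    have := cvar_le_f hN hα0 hα1 c (c k)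
    have hz : ∑ i, max (c i - c k) 0 = 0 :=
      Finset.sum_eq_zero fun i _ => max_eq_right (by linarith [hk i])
    rw [hz] at this; simpa using this
  apply le_antisymm
  · have h := cvar_add_le hN hα0 hα1 c (fun i => if i = k then D else 0)
    have hsum : ∑ i : Fin N, |if i = k then D else 0| = D := by
      rw [Finset.sum_congr rfl (fun i _ => ?_)]
      · exact Finset.sum_ite_eq' Finset.univ k (fun _ => D) |>.trans (by simp)
      · split <;> simp [abs_of_nonneg hD]
    rw [hsum] at h
    exact h
  · refine le_cvar _ _ fun t => ?_
    rcases le_total t (c k) with h | h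
    · have he : ∑ i, max ((c i + if i = k then D else 0) - t) 0
          = (∑ i, max (c i - t) 0) + D := by
        have : ∀ i : Fin N, max ((c i + if i = k then D else 0) - t) 0
            = max (c i - t) 0 + (if i = k then D else 0) := by
          intro i
          by_cases hik : i = k
          · subst hik
            rw [if_pos rfl]
            rw [max_eq_left (by linarith), max_eq_left (by linarith)]
            ring
          · simp [hik]
        rw [Finset.sum_congr rfl fun i _ => this i, Finset.sum_add_distrib,
          Finset.sum_ite_eq' Finset.univ k (fun _ => D)]
        simp
      rw [he]
      have hle := cvar_le_f hN hα0 hα1 c t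
      have : t + 1 / (α * ↑N) * ((∑ i, max (c i - t) 0) + D)
          = (t + 1 / (α * ↑N) * ∑ i, max (c i - t) 0) + 1 / (α * ↑N) * D := by ring
      rw [this]
      linarith
    · -- t ≥ c k
      have h1 : max ((c k + if k = k then D else 0) - t) 0
          ≤ ∑ i, max ((c i + if i = k then D else 0) - t) 0 :=
        Finset.single_le_sum (f := fun i => max ((c i + if i = k then D else 0) - t) 0)
          (fun i _ => le_max_right _ _) (Finset.mem_univ k)
      rw [if_pos rfl] at h1
      have key : c k + 1 / (α * N) * D ≤ t + 1 / (α * N) * max (c k + D - t) 0 := by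
        rcases le_total (c k + D - t) 0 with h2 | h2
        · rw [max_eq_right h2]
          nlinarith
        · rw [max_eq_left h2]
          nlinarith
      have : t + 1 / (α * N) * max (c k + D - t) 0
          ≤ t + 1 / (α * N) * ∑ i, max ((c i + if i = k then D else 0) - t) 0 := by
        gcongr
      linarith


lemma qnorm_nonneg {n : ℕ} (q : ℝ≥0∞) (v : Fin n → ℝ) : 0 ≤ qnorm q v := by
  unfold qnorm
  split
  · exact Real.iSup_nonneg fun i => abs_nonneg _
  · positivity

lemma qnorm_zero {n : ℕ} (q : ℝ≥0∞) (hq : 1 ≤ q) : qnorm q (0 : Fin n → ℝ) = 0 := by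
  unfold qnorm
  split
  · simp [Real.iSup_const_zero]
  · rename_i hqt
    have hp : 0 < q.toReal := ENNReal.toReal_pos (by intro h; rw [h] at hq; simp at hq) hqt
    rw [Finset.sum_eq_zero fun i _ => by simp [Real.zero_rpow hp.ne']]
    exact Real.zero_rpow (by positivity)

lemma binary_dual {n : ℕ} (q q' : ℝ≥0∞) (hq : 1 ≤ q) (hdual : 1 / q + 1 / q' = 1)
    (x : Fin n → ℝ) (hx : ∀ j, x j = 0 ∨ x j = 1) (r : ℝ) (hr : 0 ≤ r) :
    (∀ v : Fin n → ℝ, ∑ j, |v j| * x j ≤ qnorm q v * qnorm q' x) ∧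
    (∃ w : Fin n → ℝ, qnorm q w ≤ r ∧ ∑ j, w j * x j = r * qnorm q' x) := by
  have hx0 : ∀ j, 0 ≤ x j := fun j => by rcases hx j with h | h <;> simp [h]
  have hx1 : ∀ j, x j ≤ 1 := fun j => by rcases hx j with h | h <;> simp [h]
  have habs : ∀ j, |x j| = x j := fun j => abs_of_nonneg (hx0 j)
  have hsq : ∀ j, x j * x j = x j := fun j => by rcases hx j with h | h <;> simp [h]
  set m : ℝ := ∑ j, x j with hm
  have hm0 : 0 ≤ m := Finset.sum_nonneg fun j _ => hx0 j
  by_cases hqt : q = ⊤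
  · -- q = ⊤, q' = 1
    subst hqt
    have hq'1 : q' = 1 := by
      rw [one_div, ENNReal.inv_top, zero_add, one_div,
        ENNReal.inv_eq_one] at hdual
      exact hdual
    subst hq'1
    have hK : qnorm 1 x = m := by
      unfold qnorm
      rw [if_neg (by simp)]
      simp only [ENNReal.toReal_one, Real.rpow_one]
      rw [Finset.sum_congr rfl fun j _ => habs j]
      norm_num
      exact hm.symm
    rw [hK]
    constructor
    · intro v
      have hKv : qnorm ⊤ v = ⨆ i, |v i| := by unfold qnorm; rw [if_pos rfl]
      rw [hKv]
      calc ∑ j, |v j| * x j ≤ ∑ j, (⨆ i, |v i|) * x j := by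
            refine Finset.sum_le_sum fun j _ => ?_
            refine mul_le_mul_of_nonneg_right ?_ (hx0 j)
            exact le_ciSup (f := fun i => |v i|) (Set.Finite.bddAbove (Set.finite_range _)) j
        _ = (⨆ i, |v i|) * m := by rw [← Finset.mul_sum]
    · refine ⟨fun j => r * x j, ?_, ?_⟩
      · have hKw : qnorm ⊤ (fun j => r * x j) = ⨆ j, |r * x j| := by
          unfold qnorm; rw [if_pos rfl]
        rw [hKw]
        rcases isEmpty_or_nonempty (Fin n) with he | hne
        · rw [Real.iSup_of_isEmpty]; exact hr
        · refine ciSup_le fun j => ?_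
          rw [abs_mul, abs_of_nonneg hr, habs j]
          nlinarith [hx0 j, hx1 j]
      · calc ∑ j, (r * x j) * x j = ∑ j, r * x j := by
              refine Finset.sum_congr rfl fun j _ => ?_
              rw [mul_assoc, hsq j]
          _ = r * m := by rw [← Finset.mul_sum]
  · by_cases hq1 : q = 1
    · -- q = 1, q' = ⊤
      subst hq1
      have hq't : q' = ⊤ := by
        rw [one_div, inv_one] at hdual
        have : 1 / q' = 0 := by
          by_contra h
          have h1 : (1:ℝ≥0∞) < 1 + 1/q' := ENNReal.lt_add_right (by simp) h
          rw [hdual] at h1; exact lt_irrefl _ h1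
        rwa [one_div, ENNReal.inv_eq_zero] at this
      subst hq't
      have hKx : qnorm ⊤ x = ⨆ j, |x j| := by unfold qnorm; rw [if_pos rfl]
      have hqv : ∀ v : Fin n → ℝ, qnorm 1 v = ∑ j, |v j| := by
        intro v; unfold qnorm
        rw [if_neg (by simp)]
        norm_num
      by_cases hex : ∃ j0, x j0 = 1
      · obtain ⟨j0, hj0⟩ := hex
        haveI : Nonempty (Fin n) := ⟨j0⟩
        have hK1 : qnorm ⊤ x = 1 := by
          rw [hKx]
          apply le_antisymm
          · exact ciSup_le fun j => by rw [habs j]; exact hx1 j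
          · have := le_ciSup (Set.Finite.bddAbove (Set.finite_range fun j => |x j|)) j0
            rwa [habs j0, hj0] at this
        rw [hK1]
        constructor
        · intro v
          rw [hqv v, mul_one]
          refine Finset.sum_le_sum fun j _ => ?_
          nlinarith [abs_nonneg (v j), hx1 j, hx0 j]
        · refine ⟨fun j => if j = j0 then r else 0, ?_, ?_⟩
          · rw [hqv]
            have habs3 : ∀ j : Fin n, |if j = j0 then r else 0| = if j = j0 then r else 0 := by
              intro j; split
              · exact abs_of_nonneg hr
              · exact abs_zero
            rw [Finset.sum_congr rfl fun j _ => habs3 j,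
              Finset.sum_ite_eq' Finset.univ j0 (fun _ => r)]
            simp
          · have hmul : ∀ j : Fin n, (if j = j0 then r else 0) * x j = if j = j0 then r else 0 := by
              intro j; split
              · rename_i h; subst h; rw [hj0, mul_one]
              · exact zero_mul _
            rw [Finset.sum_congr rfl fun j _ => hmul j,
              Finset.sum_ite_eq' Finset.univ j0 (fun _ => r)]
            simp
      · push_neg at hex
        have hx00 : ∀ j, x j = 0 := fun j => by rcases hx j with h | h; exact h; exact absurd h (hex j)
        have hK0 : qnorm ⊤ x = 0 := by
          rw [hKx]
          rcases isEmpty_or_nonempty (Fin n) with he | hne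
          · exact Real.iSup_of_isEmpty _
          · simp [hx00]
        rw [hK0]
        constructor
        · intro v
          rw [Finset.sum_congr rfl fun j _ => by rw [hx00 j, mul_zero]]
          simp
        · exact ⟨0, by rw [qnorm_zero _ (by simp)]; exact hr, by simp [hx00]⟩
    · -- 1 < q < ⊤
      have hq1' : 1 < q := lt_of_le_of_ne hq (Ne.symm hq1)
      have hq'0 : q' ≠ 0 := by
        intro h
        rw [h] at hdual
        simp only [one_div, ENNReal.inv_zero] at hdual
        simp at hdual
      have hq't : q' ≠ ⊤ := by
        intro h
        rw [h] at hdual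
        simp only [one_div, ENNReal.inv_top, add_zero, ENNReal.inv_eq_one] at hdual
        exact hq1 hdual
      have hq0 : q ≠ 0 := by positivity
      set p := q.toReal with hp
      set p' := q'.toReal with hp'
      have hp1 : 1 < p := by
        rw [hp, ← ENNReal.toReal_one]
        exact ENNReal.toReal_lt_toReal (by simp) hqt |>.mpr hq1'
      have hsum : 1 / p + 1 / p' = 1 := by
        have h1 : (1/q).toReal = 1/p := by
          rw [ENNReal.toReal_div, ENNReal.toReal_one]
        have h2 : (1/q').toReal = 1/p' := by
          rw [ENNReal.toReal_div, ENNReal.toReal_one]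
        rw [← h1, ← h2, ← ENNReal.toReal_add, hdual, ENNReal.toReal_one]
        · simp [ENNReal.div_eq_top, hq0, hqt]
        · simp [ENNReal.div_eq_top, hq'0, hq't]
      have hconj : Real.HolderConjugate p p' := Real.holderConjugate_iff.mpr ⟨hp1, by
        rw [← one_div, ← one_div]; exact hsum⟩
      have hp0 : 0 < p := by linarith
      have h1p : 1/p < 1 := by rw [div_lt_one hp0]; exact hp1
      have hp'0 : 0 < p' := by
        have h2 : 0 < 1/p' := by linarith
        exact (one_div_pos).mp h2
      have hxp' : ∀ j, |x j| ^ p' = x j := by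
        intro j
        rcases hx j with h | h <;> rw [h]
        · simp [Real.zero_rpow hp'0.ne']
        · simp
      have hKx : qnorm q' x = m ^ (1/p') := by
        unfold qnorm
        rw [if_neg hq't, Finset.sum_congr rfl fun j _ => hxp' j]
      rw [hKx]
      constructor
      · intro v
        have := Real.inner_le_Lp_mul_Lq (s := Finset.univ) (fun j => |v j|) x hconj
        rw [Finset.sum_congr rfl fun j _ => hxp' j] at this
        have habs2 : ∀ j : Fin n, |(|v j|)| ^ p = |v j| ^ p := fun j => by rw [abs_abs]
        rw [Finset.sum_congr rfl fun j _ => habs2 j] at this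
        have hqv : qnorm q v = (∑ j, |v j| ^ p) ^ (1/p) := by
          unfold qnorm; rw [if_neg hqt]
        rw [hqv]
        exact this
      · by_cases hmz : m = 0
        · have hx00 : ∀ j, x j = 0 := fun j =>
            (Finset.sum_eq_zero_iff_of_nonneg (fun j _ => hx0 j)).mp hmz j (Finset.mem_univ j)
          refine ⟨0, by rw [qnorm_zero _ hq]; exact hr, ?_⟩
          rw [hmz, Real.zero_rpow (by positivity), mul_zero]
          simp [hx00]
        · have hmpos : 0 < m := lt_of_le_of_ne hm0 (Ne.symm hmz)
          refine ⟨fun j => r * m ^ (-(1/p)) * x j, ?_, ?_⟩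
          · have hterm : ∀ j : Fin n, |r * m ^ (-(1/p)) * x j| ^ p = (r ^ p * m⁻¹) * x j := by
              intro j
              rcases hx j with h | h <;> rw [h]
              · simp [Real.zero_rpow hp0.ne']
              · rw [mul_one, mul_one, abs_of_nonneg (by positivity),
                  Real.mul_rpow hr (by positivity), ← Real.rpow_mul hm0,
                  show -(1/p) * p = -1 by field_simp, Real.rpow_neg_one]
            have hqw : qnorm q (fun j => r * m ^ (-(1/p)) * x j) = r := by
              unfold qnorm
              rw [if_neg hqt, Finset.sum_congr rfl fun j _ => hterm j, ← Finset.mul_sum,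
                ← hm]
              rw [show r ^ p * m⁻¹ * m = r ^ p by rw [mul_assoc, inv_mul_cancel₀ hmz, mul_one]]
              rw [← Real.rpow_mul hr, show p * (1/p) = 1 by field_simp, Real.rpow_one]
            exact le_of_eq hqw
          · have : ∑ j, (r * m ^ (-(1/p)) * x j) * x j = r * m ^ (-(1/p)) * m := by
              rw [Finset.sum_congr rfl fun j _ => by rw [mul_assoc, hsq j], ← Finset.mul_sum]
            rw [this]
            have h1p' : 1/p' = 1 - 1/p := by linarith
            rw [h1p', show (1:ℝ) - 1/p = 1 + -(1/p) by ring, Real.rpow_add hmpos,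
              Real.rpow_one]
            ring

/-- For a binary vector `x`, the supremum over all perturbations `(Δ_1,…,Δ_N)` with
`Σ_i ‖Δ_i‖_q ≤ Nε` of `CVaR^α((ξ̂_1+Δ_1)ᵀx,…,(ξ̂_N+Δ_N)ᵀx)` equals
`CVaR^α(ξ̂_1ᵀx,…,ξ̂_Nᵀx) + γ ε ‖x‖_{q'}`, where `γ = N` if `α < 1/N` and `γ = 1/α`
otherwise, and `q'` is the dual exponent of `q`. -/
theorem stmt_7 (n N : ℕ) (hN : 0 < N)
    (ξ : Fin N → Fin n → ℝ) (x : Fin n → ℝ) (hx : ∀ j, x j = 0 ∨ x j = 1)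
    (α : ℝ) (hα0 : 0 < α) (hα1 : α ≤ 1) (ε : ℝ) (hε : 0 ≤ ε)
    (q q' : ℝ≥0∞) (hq : 1 ≤ q) (hdual : 1 / q + 1 / q' = 1) :
    sSup {y : ℝ | ∃ Δ : Fin N → Fin n → ℝ,
        (∑ i, qnorm q (Δ i)) ≤ N * ε ∧
        y = cvar N α (fun i => ∑ j, (ξ i j + Δ i j) * x j)} =
      cvar N α (fun i => ∑ j, ξ i j * x j) +
        (if α < 1 / (N : ℝ) then (N : ℝ) else 1 / α) * ε * qnorm q' x := by
  have hN0 : (0:ℝ) < N := Nat.cast_pos.mpr hN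
  have hNε : (0:ℝ) ≤ N * ε := by positivity
  have hx0 : ∀ j, 0 ≤ x j := fun j => by rcases hx j with h | h <;> simp [h]
  set c : Fin N → ℝ := fun i => ∑ j, ξ i j * x j with hc
  obtain ⟨hH, w, hw1, hw2⟩ := binary_dual q q' hq hdual x hx (N * ε) hNε
  set K := qnorm q' x with hKdef
  have hK0 : 0 ≤ K := qnorm_nonneg _ _
  haveI : Nonempty (Fin N) := ⟨⟨0, hN⟩⟩
  obtain ⟨k, hk⟩ := Finite.exists_max c
  set D := N * ε * K with hD
  have hD0 : 0 ≤ D := by positivity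
  set S : Set ℝ := {y : ℝ | ∃ Δ : Fin N → Fin n → ℝ,
      (∑ i, qnorm q (Δ i)) ≤ N * ε ∧
      y = cvar N α (fun i => ∑ j, (ξ i j + Δ i j) * x j)} with hS
  -- decomposition of perturbed costs
  have hdecomp : ∀ Δ : Fin N → Fin n → ℝ,
      (fun i => ∑ j, (ξ i j + Δ i j) * x j)
        = fun i => c i + ∑ j, Δ i j * x j := by
    intro Δ; funext i
    simp only [hc, add_mul, Finset.sum_add_distrib]
  -- Hölder bound for inner products
  have hdle : ∀ (v : Fin n → ℝ), |∑ j, v j * x j| ≤ qnorm q v * K := by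
    intro v
    calc |∑ j, v j * x j| ≤ ∑ j, |v j * x j| := Finset.abs_sum_le_sum_abs _ _
      _ = ∑ j, |v j| * x j := by
          refine Finset.sum_congr rfl fun j _ => ?_
          rw [abs_mul, abs_of_nonneg (hx0 j)]
      _ ≤ qnorm q v * K := hH v
  -- feasible perturbation achieving the sup
  set Δs : Fin N → Fin n → ℝ := fun i => if i = k then w else 0 with hΔs
  have hfeas : (∑ i, qnorm q (Δs i)) ≤ N * ε := by
    have he : ∀ i : Fin N, qnorm q (Δs i) = if i = k then qnorm q w else 0 := by
      intro i
      simp only [hΔs]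
      split
      · rfl
      · exact qnorm_zero q hq
    rw [Finset.sum_congr rfl fun i _ => he i,
      Finset.sum_ite_eq' Finset.univ k (fun _ => qnorm q w)]
    simpa using hw1
  have hcost : (fun i => ∑ j, (ξ i j + Δs i j) * x j)
      = fun i => c i + (if i = k then D else 0) := by
    rw [hdecomp Δs]
    funext i
    congr 1
    simp only [hΔs]
    by_cases hik : i = k
    · rw [if_pos hik, if_pos hik, hw2, hD]
    · rw [if_neg hik, if_neg hik]
      simp
  -- bound for a general feasible perturbation
  have hsum_bound : ∀ Δ : Fin N → Fin n → ℝ, (∑ i, qnorm q (Δ i)) ≤ N * ε →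
      ∀ i, |∑ j, Δ i j * x j| ≤ D := by
    intro Δ hΔ i
    refine le_trans (hdle (Δ i)) ?_
    rw [hD]
    refine mul_le_mul_of_nonneg_right ?_ hK0
    refine le_trans ?_ hΔ
    exact Finset.single_le_sum (f := fun i => qnorm q (Δ i))
      (fun i _ => qnorm_nonneg _ _) (Finset.mem_univ i)
  rcases lt_or_ge α (1 / (N:ℝ)) with hcase | hcase
  · -- α < 1/N : γ = N, cvar = max
    rw [if_pos hcase]
    have hαN : α * N ≤ 1 := by
      rw [lt_div_iff₀ hN0] at hcase
      linarith
    have hmax : cvar N α c = c k := cvar_eq_max hN hα0 hα1 hαN c k hk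
    have hub : ∀ y ∈ S, y ≤ cvar N α c + (N:ℝ) * ε * K := by
      rintro y ⟨Δ, hΔ, rfl⟩
      rw [hdecomp Δ]
      have h1 : cvar N α (fun i => c i + ∑ j, Δ i j * x j)
          ≤ cvar N α (fun i => c i + D) := by
        refine cvar_mono hN hα0 hα1 fun i => ?_
        have := hsum_bound Δ hΔ i
        have h2 := le_abs_self (∑ j, Δ i j * x j)
        linarith
      rw [cvar_add_const hN hα0 hα1 c D] at h1
      rw [hD] at h1
      linarith
    have hmem : cvar N α c + (N:ℝ) * ε * K ∈ S := by
      refine ⟨Δs, hfeas, ?_⟩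
      rw [hcost]
      have hk' : ∀ i, c i + (if i = k then D else 0) ≤ c k + (if k = k then D else 0) := by
        intro i
        rw [if_pos rfl]
        by_cases hik : i = k
        · rw [if_pos hik]; linarith [hk i]
        · rw [if_neg hik]; linarith [hk i]
      rw [cvar_eq_max hN hα0 hα1 hαN _ k hk', if_pos rfl, hmax, hD]
    exact le_antisymm (csSup_le ⟨_, hmem⟩ hub) (le_csSup ⟨_, hub⟩ hmem)
  · -- α ≥ 1/N : γ = 1/α
    rw [if_neg (not_lt.mpr hcase)]
    have hαN : 1 ≤ α * N := by
      rw [div_le_iff₀ hN0] at hcase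
      linarith
    have heq : 1 / (α * N) * D = 1 / α * ε * K := by
      rw [hD]; field_simp
    have hub : ∀ y ∈ S, y ≤ cvar N α c + 1 / α * ε * K := by
      rintro y ⟨Δ, hΔ, rfl⟩
      rw [hdecomp Δ]
      have h1 := cvar_add_le hN hα0 hα1 c (fun i => ∑ j, Δ i j * x j)
      have h2 : ∑ i, |∑ j, Δ i j * x j| ≤ ∑ i, qnorm q (Δ i) * K :=
        Finset.sum_le_sum fun i _ => hdle (Δ i)
      have h3 : ∑ i, qnorm q (Δ i) * K ≤ N * ε * K := by
        rw [← Finset.sum_mul]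
        exact mul_le_mul_of_nonneg_right hΔ hK0
      have hs : (0:ℝ) ≤ 1 / (α * N) := by positivity
      have h4 : 1 / (α * N) * ∑ i, |∑ j, Δ i j * x j| ≤ 1 / (α * N) * (N * ε * K) :=
        mul_le_mul_of_nonneg_left (le_trans h2 h3) hs
      rw [← hD, heq] at h4
      linarith
    have hmem : cvar N α c + 1 / α * ε * K ∈ S := by
      refine ⟨Δs, hfeas, ?_⟩
      rw [hcost, cvar_shift_top hN hα0 hα1 hαN c k hk D hD0, heq]
    exact le_antisymm (csSup_le ⟨_, hmem⟩ hub) (le_csSup ⟨_, hub⟩ hmem)
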